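/- Let C ⊆ F_q^n be a code valid for the constraint graph G with |C| = q^s. Then d(C) ≤ min over nonempty M' ⊆ M of (n_{M'} − |M'|) + 1. -/

import Mathlib

/-- The neighborhood `N(M')` of a set `M'` of message vertices in the constraint
bipartite graph with adjacency relation `E`. -/
def nbr {s n : ℕ} (E : Fin s → Fin n → Prop) [∀ i j, Decidable (E i j)]
    (M' : Finset (Fin s)) : Finset (Fin n) :=
  Finset.univ.filter fun j => ∃ i ∈ M', E i j

/-- Minimum Hamming distance of a code `C ⊆ F^n`. -/
noncomputable def minDist {n : ℕ} {F : Type*} [DecidableEq F] (C : Set (Fin n → F)) : ℕ :=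
  sInf {d | ∃ x ∈ C, ∃ y ∈ C, x ≠ y ∧ hammingDist x y = d}

/-- If `C ⊆ F_q^n` is a code valid for the constraint graph `G`
with `|C| = q^s`, then `d(C) ≤ min_{∅ ≠ M' ⊆ M} (n_{M'} − |M'|) + 1`.
The minimum is expressed via an `IsLeast` hypothesis. -/
theorem minDist_le_min_nbr_card_sub_card_add_one
    {s n : ℕ} {F : Type*} [Field F] [Fintype F] [DecidableEq F]
    (hsn : s ≤ n)
    (E : Fin s → Fin n → Prop) [∀ i j, Decidable (E i j)]
    (f : Fin n → (Fin s → F) → F)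
    (hloc : ∀ j : Fin n, ∀ m m' : Fin s → F,
      (∀ i : Fin s, E i j → m i = m' i) → f j m = f j m')
    (C : Set (Fin n → F))
    (hC : C = Set.range fun m : Fin s → F => fun j : Fin n => f j m)
    (henc : Function.Injective fun m : Fin s → F => fun j : Fin n => f j m)
    (dminPred : ℤ)
    (hmin : IsLeast {x : ℤ | ∃ M' : Finset (Fin s), M'.Nonempty ∧
      x = ((nbr E M').card : ℤ) - (M'.card : ℤ)} dminPred) :
    (minDist C : ℤ) ≤ dminPred + 1 := by
  classical
  obtain ⟨⟨M', hM'ne, hval⟩, -⟩ := hmin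
  set N := nbr E M' with hN
  have hq : 1 < Fintype.card F := Fintype.one_lt_card
  have key : ∀ S : Finset (Fin n), S ⊆ N → S.card < M'.card →
      ∃ x ∈ C, ∃ y ∈ C, x ≠ y ∧ ∀ j, j ∉ N \ S → x j = y j := by
    intro S hSN hScard
    set emb : (↥M' → F) → (Fin s → F) := fun g i =>
      if h : i ∈ M' then g ⟨i, h⟩ else 0 with hemb
    have hcard : Fintype.card (↥S → F) < Fintype.card (↥M' → F) := by
      rw [Fintype.card_fun, Fintype.card_fun]
      exact Nat.pow_lt_pow_right hq (by simpa using hScard)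
    obtain ⟨g₁, g₂, hg, heq⟩ := Fintype.exists_ne_map_eq_of_card_lt
      (fun g : ↥M' → F => fun j : ↥S => f j (emb g)) hcard
    have hmne : emb g₁ ≠ emb g₂ := by
      intro h
      apply hg
      funext i
      have := congrFun h i.1
      simpa [hemb, i.2] using this
    refine ⟨fun j => f j (emb g₁), ?_, fun j => f j (emb g₂), ?_, ?_, ?_⟩
    · rw [hC]; exact ⟨emb g₁, rfl⟩
    · rw [hC]; exact ⟨emb g₂, rfl⟩
    · intro h; exact hmne (henc h)
    · intro j hj
      rcases (by simpa [Finset.mem_sdiff, not_and_or, not_not, imp_iff_not_or] using hj : j ∉ N ∨ j ∈ S) with hjN | hjS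
      · apply hloc
        intro i hij
        have hiM : i ∉ M' := by
          intro hiM
          exact hjN (Finset.mem_filter.mpr ⟨Finset.mem_univ _, i, hiM, hij⟩)
        simp [hemb, hiM]
      · exact congrFun heq ⟨j, hjS⟩
  have hk : 1 ≤ M'.card := hM'ne.card_pos
  by_cases htk : N.card < M'.card
  · obtain ⟨x, hx, y, hy, hxy, hagree⟩ := key N (subset_refl N) htk
    exact absurd (funext fun j => hagree j (by simp)) hxy
  · push_neg at htk
    obtain ⟨S, hSN, hScard⟩ := Finset.exists_subset_card_eq (s := N) (n := M'.card - 1)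
      (le_trans (Nat.sub_le _ _) htk)
    obtain ⟨x, hx, y, hy, hxy, hagree⟩ := key S hSN (by omega)
    have hd : hammingDist x y ≤ (N \ S).card := by
      rw [hammingDist]
      apply Finset.card_le_card
      intro j hj
      rw [Finset.mem_filter] at hj
      by_contra h
      exact hj.2 (hagree j h)
    have hminle : minDist C ≤ hammingDist x y := Nat.sInf_le ⟨x, hx, y, hy, hxy, rfl⟩
    have hcards : (N \ S).card = N.card - (M'.card - 1) := by
      rw [Finset.card_sdiff_of_subset hSN, hScard]
    rw [hval]
    have h1 : minDist C ≤ N.card - (M'.card - 1) := by omega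
    have h2 : M'.card - 1 ≤ N.card := by omega
    push_cast
    omega
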